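/- Let t,k ≥ 3, let G be a (K_t,𝒯_k)-co-critical graph with a critical coloring τ maximizing the number of red edges, let D₁,…,D_p be the components of the blue graph G_b, and let H be obtained from G by deleting all edges inside each V(D_i). Then for any u ∈ V(D_i) and v ∈ V(D_j) with i ≠ j and uv ∉ E(H), the graph H[N_H(u) ∩ N_H(v)] contains K_{t−2} as a subgraph. -/

import Mathlib

private lemma reach_comp_eq {V : Type*} {A B : SimpleGraph V}
    (h : ∀ x y, B.Adj x y → A.connectedComponentMk x = A.connectedComponentMk y)
    {x y : V} (hr : B.Reachable x y) :
    A.connectedComponentMk x = A.connectedComponentMk y := by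
  obtain ⟨w⟩ := hr
  induction w with
  | nil => rfl
  | cons h' _ ih => exact (h _ _ h').trans ih



/-- A red/blue edge-coloring of `G`, given by its red subgraph `R ≤ G`, is a
critical coloring if the red graph is `K_t`-free and every component of the
blue graph `G \ R` has fewer than `k` vertices. -/
def IsCriticalColoring {V : Type*} (G R : SimpleGraph V) (t k : ℕ) : Prop :=
  R ≤ G ∧ (∀ S : Finset V, ¬ R.IsNClique t S) ∧
    ∀ c : (G \ R).ConnectedComponent, c.supp.ncard < k

/-- `G` is `(K_t, 𝒯_k)`-co-critical. -/
def CoCritical {V : Type*} (G : SimpleGraph V) (t k : ℕ) : Prop :=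
  G ≠ ⊤ ∧ (∃ R, IsCriticalColoring G R t k) ∧
    ∀ u v : V, u ≠ v → ¬ G.Adj u v →
      ∀ R, ¬ IsCriticalColoring (G ⊔ SimpleGraph.fromEdgeSet {s(u, v)}) R t k

/-- The spanning subgraph of `G` obtained by deleting all edges lying inside a
single component of the blue graph `B`. -/
def Hgraph {V : Type*} (G B : SimpleGraph V) : SimpleGraph V where
  Adj u v := G.Adj u v ∧ B.connectedComponentMk u ≠ B.connectedComponentMk v
  symm := by
    constructor
    intro u v h
    exact ⟨h.1.symm, h.2.symm⟩
  loopless := by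
    constructor
    intro u h
    exact h.2 rfl

/-- with `R` a critical coloring of the co-critical graph `G`
maximizing the number of red edges, and `H` the graph obtained from `G` by
deleting all edges inside blue components, any two nonadjacent (in `H`) vertices
`u, v` lying in distinct blue components have a common neighborhood in `H`
containing a `K_{t-2}`. -/
theorem stmt_7 {V : Type*} [Fintype V] (t k : ℕ) (ht : 3 ≤ t) (hk : 3 ≤ k)
    (G : SimpleGraph V) (hG : CoCritical G t k)
    (R : SimpleGraph V) (hR : IsCriticalColoring G R t k)
    (hmax : ∀ R' : SimpleGraph V, IsCriticalColoring G R' t k →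
      R'.edgeSet.ncard ≤ R.edgeSet.ncard)
    (H : SimpleGraph V) (hH : H = Hgraph G (G \ R))
    (u v : V)
    (huv : (G \ R).connectedComponentMk u ≠ (G \ R).connectedComponentMk v)
    (hadj : ¬ H.Adj u v) :
    ∃ S : Finset V, ↑S ⊆ H.neighborSet u ∩ H.neighborSet v ∧
      H.IsNClique (t - 2) S := by
  
  classical
  subst hH
  have hne : u ≠ v := fun h => huv (by rw [h])
  have hGuv : ¬ G.Adj u v := fun h => hadj ⟨h, huv⟩
  set e : SimpleGraph V := SimpleGraph.fromEdgeSet {s(u, v)} with he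
  set R' : SimpleGraph V := (Hgraph R (G \ R)) ⊔ e with hR'def
  -- R' ≤ G ⊔ e
  have hle : R' ≤ G ⊔ e := by
    intro a b hab
    rcases hab with h | h
    · exact Or.inl (hR.1 h.1)
    · exact Or.inr h
  -- e adjacency
  have he_adj : ∀ a b : V, e.Adj a b ↔ ((a = u ∧ b = v) ∨ (a = v ∧ b = u)) ∧ a ≠ b := by
    intro a b
    rw [he, SimpleGraph.fromEdgeSet_adj, Set.mem_singleton_iff, Sym2.eq_iff]
  -- the new blue graph has the same components
  set B' : SimpleGraph V := (G ⊔ e) \ R' with hB'def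
  have hBle : (G \ R) ≤ B' := by
    intro a b hab
    have hG' : G.Adj a b := hab.1
    have hnR : ¬ R.Adj a b := hab.2
    refine ⟨Or.inl hG', ?_⟩
    rintro (h | h)
    · exact hnR h.1
    · rcases (he_adj a b).mp h with ⟨(⟨rfl, rfl⟩ | ⟨rfl, rfl⟩), _⟩
      · exact hGuv hG'
      · exact hGuv hG'.symm
  have hBadj : ∀ a b : V, B'.Adj a b →
      (G \ R).connectedComponentMk a = (G \ R).connectedComponentMk b := by
    intro a b hab
    obtain ⟨hGe, hnR'⟩ := hab
    have hne' : ¬ e.Adj a b := fun h => hnR' (Or.inr h)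
    have hGab : G.Adj a b := by
      rcases hGe with h | h
      · exact h
      · exact absurd h hne'
    by_cases hRab : R.Adj a b
    · by_contra hcomp
      exact hnR' (Or.inl ⟨hRab, hcomp⟩)
    · have : (G \ R).Adj a b := (SimpleGraph.sdiff_adj _ _ _ _).mpr ⟨hGab, hRab⟩
      exact SimpleGraph.ConnectedComponent.sound this.reachable
  have hsmall : ∀ c : B'.ConnectedComponent, c.supp.ncard < k := by
    intro c
    induction c using SimpleGraph.ConnectedComponent.ind with
    | _ x =>
      have hsupp : (B'.connectedComponentMk x).supp
          = ((G \ R).connectedComponentMk x).supp := by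
        ext y
        simp only [SimpleGraph.ConnectedComponent.mem_supp_iff,
          SimpleGraph.ConnectedComponent.eq]
        constructor
        · intro hr
          exact SimpleGraph.ConnectedComponent.exact
            (reach_comp_eq hBadj hr)
        · intro hr
          exact hr.mono hBle
      rw [hsupp]
      exact hR.2.2 _
  -- from co-criticality, R' contains a K_t
  have hfail := hG.2.2 u v hne hGuv R'
  have hKt : ∃ S : Finset V, R'.IsNClique t S := by
    by_contra hc
    push_neg at hc
    exact hfail ⟨hle, fun S => hc S, hsmall⟩
  obtain ⟨S, hS⟩ := hKt
  -- u and v belong to S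
  have memS : u ∈ S ∧ v ∈ S := by
    constructor
    · by_contra hu
      refine hR.2.1 S ⟨?_, hS.2⟩
      intro x hx y hy hxy
      rcases hS.1 hx hy hxy with h | h
      · exact h.1
      · rcases (he_adj x y).mp h with ⟨(⟨rfl, _⟩ | ⟨_, rfl⟩), _⟩
        · exact absurd (Finset.mem_coe.mp hx) hu
        · exact absurd (Finset.mem_coe.mp hy) hu
    · by_contra hv
      refine hR.2.1 S ⟨?_, hS.2⟩
      intro x hx y hy hxy
      rcases hS.1 hx hy hxy with h | h
      · exact h.1
      · rcases (he_adj x y).mp h with ⟨(⟨_, rfl⟩ | ⟨rfl, _⟩), _⟩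
        · exact absurd (Finset.mem_coe.mp hy) hv
        · exact absurd (Finset.mem_coe.mp hx) hv
  obtain ⟨hu, hv⟩ := memS
  set A : Finset V := (S.erase u).erase v with hA
  have hAmem : ∀ x ∈ A, x ∈ S ∧ x ≠ u ∧ x ≠ v := by
    intro x hx
    rw [hA, Finset.mem_erase, Finset.mem_erase] at hx
    exact ⟨hx.2.2, hx.2.1, hx.1⟩
  -- from R'-adjacency to H-adjacency
  have hHadj : ∀ x y : V, x ≠ u → x ≠ v → R'.Adj x y → (Hgraph G (G \ R)).Adj x y := by
    intro x y hxu hxv h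
    rcases h with h | h
    · exact ⟨hR.1 h.1, h.2⟩
    · rcases (he_adj x y).mp h with ⟨(⟨rfl, _⟩ | ⟨rfl, _⟩), _⟩
      · exact absurd rfl hxu
      · exact absurd rfl hxv
  refine ⟨A, ?_, ?_, ?_⟩
  · intro x hx
    obtain ⟨hxS, hxu, hxv⟩ := hAmem x (Finset.mem_coe.mp hx)
    constructor
    · exact ((hHadj x u hxu hxv (hS.1 (Finset.mem_coe.mpr hxS) (Finset.mem_coe.mpr hu) hxu)).symm :
        (Hgraph G (G \ R)).Adj u x)
    · exact ((hHadj x v hxu hxv (hS.1 (Finset.mem_coe.mpr hxS) (Finset.mem_coe.mpr hv) hxv)).symm :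
        (Hgraph G (G \ R)).Adj v x)
  · intro x hx y hy hxy
    obtain ⟨hxS, hxu, hxv⟩ := hAmem x (Finset.mem_coe.mp hx)
    obtain ⟨hyS, _, _⟩ := hAmem y (Finset.mem_coe.mp hy)
    exact hHadj x y hxu hxv (hS.1 (Finset.mem_coe.mpr hxS) (Finset.mem_coe.mpr hyS) hxy)
  · have hvS' : v ∈ S.erase u := Finset.mem_erase.mpr ⟨hne.symm, hv⟩
    have h1 : A.card = (S.erase u).card - 1 := Finset.card_erase_of_mem hvS'
    have h2 : (S.erase u).card = S.card - 1 := Finset.card_erase_of_mem hu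
    have h3 : S.card = t := hS.2
    omega
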